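/- Let 𝕊 : M₃ → M₃ be a linear map, ρ > 0, w ∈ ℝ³ a unit vector, and define E(w) : ℝ³ → ℝ³ by E(w)u = (𝕊[u ⊗ w]) w. (i) A pair (Z, z) ∈ M₃ × ℝ³ satisfies the system −ρ⁻¹ (z ⊗ w) = λ Z, −(𝕊[Z]) w = λ z with λ = 0 if and only if z = 0 and (𝕊[Z]) w = 0. (ii) If moreover E(w) is invertible, then the linear map Φ_w : M₃ → ℝ³, Φ_w(Z) = (𝕊[Z]) w, is surjective (given y ∈ ℝ³, Z = (E(w)⁻¹ y) ⊗ w satisfies Φ_w(Z) = y), and hence its kernel {Z ∈ M₃ : (𝕊[Z]) w = 0} is a subspace of M₃ of dimension exactly 6. Consequently the zero proper number of the hyperbolicity matrix has geometric multiplicity six. -/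

import Mathlib

open scoped RealInnerProductSpace

noncomputable section

abbrev M3 : Type := EuclideanSpace ℝ (Fin 3 × Fin 3)
abbrev R3 : Type := EuclideanSpace ℝ (Fin 3)

/-- The dyadic product `(z ⊗ w)_{ij} = z_i w_j`. -/
def dyad (z w : R3) : M3 :=
  (WithLp.equiv 2 ((Fin 3 × Fin 3) → ℝ)).symm fun ij => z ij.1 * w ij.2

/-- Matrix-vector product `(M w)_i = Σ_j M_{ij} w_j`. -/
def matVec (M : M3) (w : R3) : R3 :=
  (WithLp.equiv 2 (Fin 3 → ℝ)).symm fun i => ∑ j, M (i, j) * w j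

/-- The acoustic tensor `E(w) u = (𝕊[u ⊗ w]) w`. -/
def acoustic (S : M3 →ₗ[ℝ] M3) (w u : R3) : R3 :=
  matVec (S (dyad u w)) w

/-- The linear map `Φ_w : Z ↦ (𝕊[Z]) w`. -/
def phiMap (S : M3 →ₗ[ℝ] M3) (w : R3) : M3 →ₗ[ℝ] R3 where
  toFun Z := matVec (S Z) w
  map_add' Z Z' := by
    ext i
    simp [matVec, map_add, Finset.sum_add_distrib, add_mul, PiLp.add_apply]
  map_smul' r Z := by
    ext i
    simp [matVec, map_smul, Finset.mul_sum, mul_assoc, PiLp.smul_apply, smul_eq_mul]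

/-- Zero-eigenvalue part of Proposition 5: (i) `(Z, z)` solves the eigenvalue system with
`λ = 0` iff `z = 0` and `(𝕊[Z])w = 0`; (ii) if the acoustic tensor `E(w)` is invertible,
then `Φ_w : Z ↦ (𝕊[Z])w` is surjective (with explicit preimage `(E(w)⁻¹ y) ⊗ w`), hence
its kernel has dimension exactly `6`: zero is a proper number of geometric multiplicity
six. -/
theorem stmt15 (S : M3 →ₗ[ℝ] M3) (ρ : ℝ) (hρ : 0 < ρ)
    (w : R3) (hw : ‖w‖ = 1) :
    (∀ (Z : M3) (z : R3),
      ((-ρ⁻¹) • dyad z w = (0 : ℝ) • Z ∧ -(matVec (S Z) w) = (0 : ℝ) • z)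
        ↔ (z = 0 ∧ matVec (S Z) w = 0)) ∧
    (Function.Bijective (acoustic S w) →
      ((∀ (y u : R3), acoustic S w u = y → matVec (S (dyad u w)) w = y) ∧
       Function.Surjective (phiMap S w) ∧
       Module.finrank ℝ (LinearMap.ker (phiMap S w)) = 6)) := by

  constructor
  · intro Z z
    constructor
    · rintro ⟨h1, h2⟩
      have hzw : dyad z w = 0 := by
        have : (-ρ⁻¹) • dyad z w = 0 := by rw [h1]; simp
        have hne : (-ρ⁻¹ : ℝ) ≠ 0 := by
          simp [hρ.ne']
        exact (smul_eq_zero.mp this).resolve_left hne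
      have hz : z = 0 := by
        have hwne : w ≠ 0 := by
          intro h; rw [h] at hw; simp at hw
        obtain ⟨j, hj⟩ : ∃ j, w j ≠ 0 := by
          by_contra h
          push_neg at h
          apply hwne
          ext j; exact h j
        ext i
        have := congrFun (congrArg (WithLp.equiv 2 _) hzw) (i, j)
        simp [dyad] at this
        rcases this with h | h
        · simp [h]
        · exact absurd h hj
      refine ⟨hz, ?_⟩
      have := h2
      simp at this
      exact this
    · rintro ⟨hz, hZ⟩
      constructor
      · subst hz
        have : dyad (0 : R3) w = 0 := by
          ext ij; simp [dyad]
        rw [this]; simp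
      · rw [hZ]; simp
  · intro hbij
    refine ⟨fun y u h => h, ?_, ?_⟩
    · intro y
      obtain ⟨u, hu⟩ := hbij.2 y
      exact ⟨dyad u w, hu⟩
    · have hsurj : Function.Surjective (phiMap S w) := by
        intro y
        obtain ⟨u, hu⟩ := hbij.2 y
        exact ⟨dyad u w, hu⟩
      have hrank := LinearMap.finrank_range_add_finrank_ker (phiMap S w)
      have hr : LinearMap.range (phiMap S w) = ⊤ := LinearMap.range_eq_top.mpr hsurj
      rw [hr] at hrank
      have h3 : Module.finrank ℝ R3 = 3 := by
        simp [finrank_euclideanSpace]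
      have h9 : Module.finrank ℝ M3 = 9 := by
        simp [finrank_euclideanSpace]
      rw [finrank_top, h3, h9] at hrank
      omega
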